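/- arXiv:2506.06187 — 4 statements merged into one kernel-verified Lean document; each statement's English description precedes it below -/
import Mathlib

section
/- Let M be a first-order structure, let Ω = [0,1) with Lebesgue measure, and let θ_1(x,ȳ),…,θ_n(x,ȳ) be first-order formulas such that in all structures ⊨ (θ_1 ∨ … ∨ θ_n) and ⊨ ¬(θ_i ∧ θ_j) for i < j. Fix Borel-measurable functions f̄ = (f_1,…,f_k) : Ω → M (each with countable range, preimages of points Borel) and Borel sets B_1,…,B_n ⊆ Ω. Then the following are equivalent: (i) there exists a Borel random variable g : Ω → M such that B_i = {ω : M ⊨ θ_i(g(ω), f̄(ω))} (up to null sets) for each i; (ii) B_1,…,B_n partition Ω (up to null sets) and B_i ⊆ {ω : M ⊨ ∃x θ_i(x, f̄(ω))} (up to null sets) for each i. -/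
open MeasureTheory FirstOrder

/-- for formulas `θ_1,…,θ_n(x,ȳ)` that are (in all structures)
jointly exhaustive and mutually exclusive in `x`, and Borel random variables
`f̄ : [0,1) → M` and Borel sets `B_1,…,B_n ⊆ [0,1)`, the following are equivalent:
(i) some Borel random variable `g` has `B_i = [[θ_i(g,f̄)]]` up to null sets;
(ii) the `B_i` partition `[0,1)` up to null sets and `B_i ⊆ [[∃x θ_i(x,f̄)]]` up to
null sets. The variable `x` is the `none` coordinate of `Option (Fin k)`. -/
theorem stmt_4 {L : Language} (M : Type) [L.Structure M] [Countable M] [Nonempty M]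
    (n k : ℕ) (θ : Fin n → L.Formula (Option (Fin k)))
    (hex : ∀ (A : Type) [L.Structure A] (v : Option (Fin k) → A),
      ∃ i, (θ i).Realize v)
    (hdisj : ∀ (A : Type) [L.Structure A] (v : Option (Fin k) → A) (i j : Fin n),
      i ≠ j → ¬((θ i).Realize v ∧ (θ j).Realize v))
    (f : Fin k → ℝ → M) (hf : ∀ j a, MeasurableSet (f j ⁻¹' {a}))
    (B : Fin n → Set ℝ) (hB : ∀ i, MeasurableSet (B i)) :
    (∃ g : ℝ → M, (∀ a, MeasurableSet (g ⁻¹' {a})) ∧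
      ∀ i, (volume.restrict (Set.Ico (0 : ℝ) 1))
        (symmDiff (B i) {ω | (θ i).Realize (fun o => o.elim (g ω) (fun j => f j ω))}) = 0)
    ↔
    ((volume.restrict (Set.Ico (0 : ℝ) 1)) ((⋃ i, B i)ᶜ) = 0 ∧
     (∀ i j, i ≠ j → (volume.restrict (Set.Ico (0 : ℝ) 1)) (B i ∩ B j) = 0) ∧
     ∀ i, (volume.restrict (Set.Ico (0 : ℝ) 1))
       (B i \ {ω | ∃ x : M, (θ i).Realize (fun o => o.elim x (fun j => f j ω))}) = 0) := by

  classical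
  set μ := volume.restrict (Set.Ico (0 : ℝ) 1) with hμ
  constructor
  · rintro ⟨g, hg, hsd⟩
    set E : Fin n → Set ℝ :=
      fun i => {ω | (θ i).Realize (fun o => o.elim (g ω) (fun j => f j ω))} with hE
    have hcover : ∀ ω, ∃ i, ω ∈ E i := fun ω => hex M _
    have hdis : ∀ (ω : ℝ) (i j : Fin n), i ≠ j → ¬(ω ∈ E i ∧ ω ∈ E j) :=
      fun ω i j h => hdisj M _ i j h
    have hnull : μ (⋃ i, symmDiff (B i) (E i)) = 0 := measure_iUnion_null hsd
    refine ⟨?_, ?_, ?_⟩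
    · refine measure_mono_null ?_ hnull
      intro ω hω
      simp only [Set.mem_compl_iff, Set.mem_iUnion, not_exists] at hω
      obtain ⟨i, hi⟩ := hcover ω
      exact Set.mem_iUnion.2 ⟨i, Set.mem_symmDiff.2 (Or.inr ⟨hi, hω i⟩)⟩
    · intro i j hij
      refine measure_mono_null ?_ hnull
      rintro ω ⟨hi, hj⟩
      by_cases h : ω ∈ E i
      · exact Set.mem_iUnion.2 ⟨j, Set.mem_symmDiff.2
          (Or.inl ⟨hj, fun hj' => hdis ω i j hij ⟨h, hj'⟩⟩)⟩
      · exact Set.mem_iUnion.2 ⟨i, Set.mem_symmDiff.2 (Or.inl ⟨hi, h⟩)⟩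
    · intro i
      refine measure_mono_null ?_ (hsd i)
      rintro ω ⟨hi, hni⟩
      exact Set.mem_symmDiff.2 (Or.inl ⟨hi, fun h => hni ⟨g ω, h⟩⟩)
  · rintro ⟨h1, h2, h3⟩
    let F : ℝ → (Fin k → M) := fun ω j => f j ω
    let idx : ℝ → Option (Fin n) := fun ω =>
      if h : ∃ i, ω ∈ B i then some (Fin.find (fun i => ω ∈ B i) h) else none
    have hfn : ∀ ω, idx ω = none ↔ ∀ i, ω ∉ B i := by
      intro ω; simp [idx]
    have hfs : ∀ ω i, idx ω = some i ↔ ω ∈ B i ∧ ∀ j, ω ∈ B j → i ≤ j := by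
      intro ω i; simp only [idx]; split_ifs with h
      · rw [Option.some_inj, Fin.find_eq_iff]; constructor
        · rintro ⟨hi, hm⟩; exact ⟨hi, fun j hj => not_lt.1 fun hji => hm j hji hj⟩
        · rintro ⟨hi, hm⟩; exact ⟨hi, fun j hji hj => absurd (hm j hj) (not_le.2 hji)⟩
      · simp only [reduceCtorEq, false_iff]; exact fun ⟨hi, _⟩ => h ⟨i, hi⟩
    let pick : Option (Fin n) × (Fin k → M) → M := fun p =>
      match p with
      | (none, _) => Classical.arbitrary M
      | (some i, a) =>
        if h : ∃ x, (θ i).Realize (fun o => o.elim x a) then h.choose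
        else Classical.arbitrary M
    let c : ℝ → Option (Fin n) × (Fin k → M) := fun ω => (idx ω, F ω)
    let g : ℝ → M := fun ω => pick (c ω)
    have hidx : ∀ o : Option (Fin n), MeasurableSet (idx ⁻¹' {o}) := by
      intro o
      match o with
      | none =>
        have h : idx ⁻¹' {none} = ⋂ i, (B i)ᶜ := by
          ext ω
          simp only [Set.mem_preimage, Set.mem_singleton_iff, Set.mem_iInter, Set.mem_compl_iff]
          exact hfn ω
        rw [h]
        exact MeasurableSet.iInter fun i => (hB i).compl
      | some i =>
        have h : idx ⁻¹' {some i} = B i ∩ ⋂ j, {ω | ω ∈ B j → i ≤ j} := by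
          ext ω
          simp only [Set.mem_preimage, Set.mem_singleton_iff, Set.mem_iInter, Set.mem_inter_iff,
            Set.mem_setOf_eq]
          exact hfs ω i
        rw [h]
        refine (hB i).inter (MeasurableSet.iInter fun j => ?_)
        by_cases hij : i ≤ j
        · have : {ω : ℝ | ω ∈ B j → i ≤ j} = Set.univ := by ext ω; simp [hij]
          rw [this]; exact MeasurableSet.univ
        · have : {ω : ℝ | ω ∈ B j → i ≤ j} = (B j)ᶜ := by ext ω; simp [hij]
          rw [this]; exact (hB j).compl
    have hcell : ∀ p : Option (Fin n) × (Fin k → M), MeasurableSet (c ⁻¹' {p}) := by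
      intro p
      have h : c ⁻¹' {p} = idx ⁻¹' {p.1} ∩ ⋂ j, f j ⁻¹' {p.2 j} := by
        ext ω
        simp only [c, Set.mem_preimage, Set.mem_singleton_iff, Prod.ext_iff,
          Set.mem_inter_iff, Set.mem_iInter, funext_iff, F]
      rw [h]
      exact (hidx p.1).inter (MeasurableSet.iInter fun j => hf j (p.2 j))
    have hgmeas : ∀ a, MeasurableSet (g ⁻¹' {a}) := by
      intro a
      have h : g ⁻¹' {a} =
          ⋃ p ∈ {p : Option (Fin n) × (Fin k → M) | pick p = a}, c ⁻¹' {p} := by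
        ext ω
        constructor
        · intro hω
          exact Set.mem_biUnion (show pick (c ω) = a from hω) rfl
        · intro hω
          simp only [Set.mem_iUnion, Set.mem_setOf_eq, Set.mem_preimage,
            Set.mem_singleton_iff] at hω
          obtain ⟨p, hp, hcp⟩ := hω
          show pick (c ω) = a
          rw [hcp, hp]
      rw [h]
      exact MeasurableSet.biUnion (Set.to_countable _) fun p _ => hcell p
    refine ⟨g, hgmeas, ?_⟩
    -- the good set
    let Ex : Fin n → Set ℝ :=
      fun i => {ω | ∃ x : M, (θ i).Realize (fun o => o.elim x (fun j => f j ω))}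
    let G : Set ℝ := (⋃ i, B i) ∩ (⋂ i, ⋂ j, ⋂ _h : i ≠ j, (B i ∩ B j)ᶜ) ∩
      (⋂ i, (B i \ Ex i)ᶜ)
    have hGc : μ Gᶜ = 0 := by
      have hsub : Gᶜ ⊆ ((⋃ i, B i)ᶜ ∪ (⋃ i, ⋃ j, ⋃ _h : i ≠ j, B i ∩ B j)) ∪
          (⋃ i, B i \ Ex i) := by
        intro ω hω
        simp only [G, Set.mem_compl_iff, Set.mem_inter_iff, Set.mem_iInter,
          not_and_or, not_forall] at hω
        rcases hω with (h | h) | h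
        · exact Or.inl (Or.inl h)
        · obtain ⟨i, j, hij, hmem⟩ := h
          push_neg at hmem
          exact Or.inl (Or.inr (Set.mem_iUnion.2 ⟨i, Set.mem_iUnion.2 ⟨j,
            Set.mem_iUnion.2 ⟨hij, hmem⟩⟩⟩))
        · obtain ⟨i, hmem⟩ := h
          push_neg at hmem
          exact Or.inr (Set.mem_iUnion.2 ⟨i, hmem⟩)
      refine measure_mono_null hsub ?_
      refine measure_union_null (measure_union_null h1 ?_) ?_
      · exact measure_iUnion_null fun i => measure_iUnion_null fun j =>
          measure_iUnion_null fun hij => h2 i j hij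
      · exact measure_iUnion_null fun i => h3 i
    -- key pointwise fact on G
    have hkey : ∀ ω ∈ G, ∀ i : Fin n,
        (ω ∈ B i ↔ (θ i).Realize (fun o => o.elim (g ω) (fun j => f j ω))) := by
      intro ω hωG i
      obtain ⟨⟨hωU, hωD⟩, hωE⟩ := hωG
      obtain ⟨i₀, hi₀⟩ := Set.mem_iUnion.1 hωU
      have huniq : ∀ j : Fin n, ω ∈ B j → j = i₀ := by
        intro j hj
        by_contra hne
        exact (Set.mem_iInter.1 (Set.mem_iInter.1 (Set.mem_iInter.1 hωD j) i₀) hne) ⟨hj, hi₀⟩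
      have hEx : ω ∈ Ex i₀ := by
        by_contra hn
        exact (Set.mem_iInter.1 hωE i₀) ⟨hi₀, hn⟩
      have hidxω : idx ω = some i₀ := by
        rcases ho : idx ω with _ | j₀
        · exact absurd hi₀ ((hfn ω).1 ho i₀)
        · have := ((hfs ω j₀).1 ho).1
          rw [huniq j₀ this] at ho ⊢
      have hgw : (θ i₀).Realize (fun o => o.elim (g ω) (fun j => f j ω)) := by
        have hgeq : g ω = pick (some i₀, F ω) := by
          show pick (idx ω, F ω) = _
          rw [hidxω]
        have hxex : ∃ x, (θ i₀).Realize (fun o => o.elim x (F ω)) := hEx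
        have : pick (some i₀, F ω) = hxex.choose := dif_pos hxex
        rw [hgeq, this]
        exact hxex.choose_spec
      by_cases hii : i = i₀
      · subst hii
        exact ⟨fun _ => hgw, fun _ => hi₀⟩
      · constructor
        · intro hBi; exact absurd (huniq i hBi) hii
        · intro hEi
          exact absurd ⟨hEi, hgw⟩ (hdisj M (fun o => o.elim (g ω) (fun j => f j ω)) i i₀ hii)
    intro i
    refine measure_mono_null ?_ hGc
    intro ω hω
    rw [Set.mem_symmDiff] at hω
    intro hωG
    rcases hω with ⟨hb, he⟩ | ⟨he, hb⟩
    · exact he ((hkey ω hωG i).1 hb)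
    · exact hb ((hkey ω hωG i).2 he)
end

section
/- Let (Ω,μ) be a probability space and let V_1,…,V_n and C_1,…,C_n be measurable sets such that V_1,…,V_n partition Ω, ⋃_j C_j = Ω, and μ(V_i ∖ C_i) < η′ for each i. Then there exist measurable sets B_1,…,B_n partitioning Ω with B_i ⊆ C_i and μ(V_i △ B_i) ≤ (n+1)·η′ for each i. -/
open MeasureTheory

/-- a measurable partition `V_1,…,V_n` of `Ω` which almost refines a
measurable cover `C_1,…,C_n` (`μ(V_i ∖ C_i) < η′`) can be corrected to a partition
`B_1,…,B_n` subordinate to the cover (`B_i ⊆ C_i`) with `μ(V_i △ B_i) ≤ (n+1)·η′`. -/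
theorem stmt_5 {Ω : Type*} [MeasurableSpace Ω] (μ : Measure Ω)
    [IsProbabilityMeasure μ]
    (n : ℕ) (V C : Fin n → Set Ω)
    (hV : ∀ i, MeasurableSet (V i)) (hC : ∀ i, MeasurableSet (C i))
    (hVdisj : Pairwise (Function.onFun Disjoint V))
    (hVcover : (⋃ i, V i) = Set.univ)
    (hCcover : (⋃ i, C i) = Set.univ)
    (η' : ℝ) (hη' : ∀ i, (μ (V i \ C i)).toReal < η') :
    ∃ B : Fin n → Set Ω, (∀ i, MeasurableSet (B i)) ∧
      Pairwise (Function.onFun Disjoint B) ∧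
      (⋃ i, B i) = Set.univ ∧
      (∀ i, B i ⊆ C i) ∧
      ∀ i, (μ (symmDiff (V i) (B i))).toReal ≤ (n + 1 : ℝ) * η' := by
  classical
  set L : Set Ω := ⋃ j, V j \ C j with hLdef
  set F : Fin n → Set Ω := fun i => C i \ ⋃ j, ⋃ (_ : j < i), C j with hFdef
  set B : Fin n → Set Ω := fun i => (V i ∩ C i) ∪ (L ∩ F i) with hBdef
  -- V i ∩ C i is disjoint from L
  have hVC_L : ∀ i x, x ∈ V i ∩ C i → x ∉ L := by
    intro i x hx hxL
    rcases Set.mem_iUnion.1 hxL with ⟨j, hj⟩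
    by_cases hij : j = i
    · exact hj.2 (hij ▸ hx.2)
    · exact (hVdisj hij).le_bot ⟨hj.1, hx.1⟩
  have hBC : ∀ i, B i ⊆ C i := by
    intro i x hx
    rcases hx with h | h
    · exact h.2
    · exact h.2.1
  have hBm : ∀ i, MeasurableSet (B i) := by
    intro i
    refine ((hV i).inter (hC i)).union
      ((MeasurableSet.iUnion fun j => (hV j).diff (hC j)).inter
        (((hC i).diff (MeasurableSet.iUnion fun j => MeasurableSet.iUnion fun _ => hC j))))
  have hBdisj : Pairwise (Function.onFun Disjoint B) := by
    intro i j hij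
    rw [Function.onFun, Set.disjoint_left]
    intro x hxi hxj
    rcases hxi with h1 | h1 <;> rcases hxj with h2 | h2
    · exact (hVdisj hij).le_bot ⟨h1.1, h2.1⟩
    · exact hVC_L i x h1 h2.1
    · exact hVC_L j x h2 h1.1
    · rcases lt_or_gt_of_ne hij with hlt | hlt
      · exact h2.2.2 (Set.mem_iUnion.2 ⟨i, Set.mem_iUnion.2 ⟨hlt, h1.2.1⟩⟩)
      · exact h1.2.2 (Set.mem_iUnion.2 ⟨j, Set.mem_iUnion.2 ⟨hlt, h2.2.1⟩⟩)
  have hBcover : (⋃ i, B i) = Set.univ := by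
    apply Set.eq_univ_of_forall
    intro x
    rcases Set.mem_iUnion.1 (hVcover ▸ Set.mem_univ x) with ⟨i, hxV⟩
    by_cases hxC : x ∈ C i
    · exact Set.mem_iUnion.2 ⟨i, Or.inl ⟨hxV, hxC⟩⟩
    · have hxL : x ∈ L := Set.mem_iUnion.2 ⟨i, hxV, hxC⟩
      have hsne : (Finset.univ.filter (fun j => x ∈ C j)).Nonempty := by
        rcases Set.mem_iUnion.1 (hCcover ▸ Set.mem_univ x) with ⟨j, hj⟩
        exact ⟨j, Finset.mem_filter.2 ⟨Finset.mem_univ j, hj⟩⟩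
      set i₀ := (Finset.univ.filter (fun j => x ∈ C j)).min' hsne with hi₀
      have hxi₀ : x ∈ C i₀ := (Finset.mem_filter.1 (Finset.min'_mem _ hsne)).2
      refine Set.mem_iUnion.2 ⟨i₀, Or.inr ⟨hxL, hxi₀, ?_⟩⟩
      intro hmem
      rcases Set.mem_iUnion.1 hmem with ⟨j, hj⟩
      rcases Set.mem_iUnion.1 hj with ⟨hji, hxj⟩
      exact absurd (Finset.min'_le _ j (Finset.mem_filter.2 ⟨Finset.mem_univ j, hxj⟩))
        (not_le.2 hji)
  refine ⟨B, hBm, hBdisj, hBcover, hBC, ?_⟩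
  intro i
  have hsub : symmDiff (V i) (B i) ⊆ (V i \ C i) ∪ L := by
    intro x hx
    rcases hx with h | h
    · left
      refine ⟨h.1, fun hxC => h.2 (Or.inl ⟨h.1, hxC⟩)⟩
    · right
      rcases h.1 with h1 | h1
      · exact absurd h1.1 h.2
      · exact h1.1
  have hmono : μ (symmDiff (V i) (B i)) ≤ μ (V i \ C i) + ∑ j, μ (V j \ C j) := by
    calc μ (symmDiff (V i) (B i)) ≤ μ ((V i \ C i) ∪ L) := measure_mono hsub
    _ ≤ μ (V i \ C i) + μ L := measure_union_le _ _
    _ ≤ μ (V i \ C i) + ∑ j, μ (V j \ C j) := by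
        gcongr
        exact measure_iUnion_fintype_le μ _
  have hfin : ∀ s : Set Ω, μ s ≠ ⊤ := fun s => measure_ne_top μ s
  have h1 : (μ (symmDiff (V i) (B i))).toReal
      ≤ (μ (V i \ C i)).toReal + ∑ j, (μ (V j \ C j)).toReal := by
    have := ENNReal.toReal_mono (by
      refine ENNReal.add_ne_top.2 ⟨hfin _, ?_⟩
      exact (ENNReal.sum_lt_top.2 fun j _ => (hfin _).lt_top).ne) hmono
    rwa [ENNReal.toReal_add (hfin _)
      (ENNReal.sum_lt_top.2 fun j _ => (hfin _).lt_top).ne, ENNReal.toReal_sum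
      (fun j _ => hfin _)] at this
  have h2 : ∑ j, (μ (V j \ C j)).toReal ≤ (n : ℝ) * η' := by
    calc ∑ j : Fin n, (μ (V j \ C j)).toReal ≤ ∑ _j : Fin n, η' :=
      Finset.sum_le_sum fun j _ => (hη' j).le
    _ = (n : ℝ) * η' := by simp [mul_comm]
  have h3 := (hη' i).le
  nlinarith [h1, h2, h3]
end

section
/- Let f_1,…,f_k be simple M-valued random variables on [0,1) (finite-range, with Borel level sets) and let φ(x_1,…,x_k,y) be any first-order formula. Then for every ε > 0 there is a simple M-valued random variable g on [0,1) such that μ([[∃y φ(f̄,y)]] △ [[φ(f̄,g)]]) < ε. Consequently μ[[∃y φ(f̄,y)]] = sup_g μ[[φ(f̄,g)]], the supremum ranging over simple random variables g. -/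
open MeasureTheory FirstOrder

/-- fullness: for simple `M`-valued random variables `f̄` on `[0,1)`
and any first-order formula `φ(x̄,y)`, the event `[[∃y φ(f̄,y)]]` is approximated
from within, up to arbitrarily small measure, by events `[[φ(f̄,g)]]` with `g`
simple; consequently `μ[[∃y φ(f̄,y)]]` is the supremum of the `μ[[φ(f̄,g)]]`. -/
theorem stmt_7 {L : Language} (M : Type) [L.Structure M] [Nonempty M]
    (k : ℕ) (f : Fin k → ℝ → M)
    (hf : ∀ j, (Set.range (f j)).Finite ∧ ∀ a, MeasurableSet (f j ⁻¹' {a}))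
    (φ : L.Formula (Fin (k + 1))) :
    (∀ ε : ℝ, 0 < ε → ∃ g : ℝ → M, (Set.range g).Finite ∧
      (∀ a, MeasurableSet (g ⁻¹' {a})) ∧
      ((volume.restrict (Set.Ico (0 : ℝ) 1))
        (symmDiff {ω | ∃ x : M, φ.Realize (Fin.snoc (fun j => f j ω) x)}
          {ω | φ.Realize (Fin.snoc (fun j => f j ω) (g ω))})).toReal < ε)
    ∧
    ((volume.restrict (Set.Ico (0 : ℝ) 1))
        {ω | ∃ x : M, φ.Realize (Fin.snoc (fun j => f j ω) x)}).toReal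
      = sSup {t : ℝ | ∃ g : ℝ → M, (Set.range g).Finite ∧
          (∀ a, MeasurableSet (g ⁻¹' {a})) ∧
          t = ((volume.restrict (Set.Ico (0 : ℝ) 1))
            {ω | φ.Realize (Fin.snoc (fun j => f j ω) (g ω))}).toReal} := by
  classical
  set μ := volume.restrict (Set.Ico (0 : ℝ) 1) with hμ
  -- every set has finite μ-measure
  have hfin : ∀ s : Set ℝ, μ s ≠ ⊤ := by
    intro s
    refine ne_of_lt (lt_of_le_of_lt (measure_mono (Set.subset_univ s)) ?_)
    rw [hμ, Measure.restrict_apply_univ, Real.volume_Ico]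
    exact ENNReal.ofReal_lt_top
  -- the combined simple function
  set F : ℝ → (Fin k → M) := fun ω j => f j ω with hF
  have hFrange : (Set.range F).Finite := by
    have : Set.range F ⊆ Set.univ.pi (fun j => Set.range (f j)) := by
      rintro _ ⟨ω, rfl⟩ j _
      exact ⟨ω, rfl⟩
    exact (Set.Finite.pi (fun j => (hf j).1)).subset this
  have hFmeas : ∀ v : Fin k → M, MeasurableSet (F ⁻¹' {v}) := by
    intro v
    have : F ⁻¹' {v} = ⋂ j, f j ⁻¹' {v j} := by
      ext ω
      simp [hF, funext_iff]
    rw [this]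
    exact MeasurableSet.iInter (fun j => (hf j).2 (v j))
  -- witness function
  set w : (Fin k → M) → M := fun v =>
    if h : ∃ x : M, φ.Realize (Fin.snoc v x) then h.choose else Classical.arbitrary M
    with hw
  set g : ℝ → M := fun ω => w (F ω) with hg
  have hgrange : (Set.range g).Finite := by
    have : Set.range g ⊆ w '' Set.range F := by
      rintro _ ⟨ω, rfl⟩
      exact ⟨F ω, ⟨ω, rfl⟩, rfl⟩
    exact (hFrange.image w).subset this
  have hgmeas : ∀ a : M, MeasurableSet (g ⁻¹' {a}) := by
    intro a
    have : g ⁻¹' {a} = ⋃ v ∈ {v ∈ Set.range F | w v = a}, F ⁻¹' {v} := by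
      ext ω
      simp only [Set.mem_preimage, Set.mem_singleton_iff, Set.mem_iUnion, Set.mem_setOf_eq]
      constructor
      · intro h
        exact ⟨F ω, ⟨⟨ω, rfl⟩, h⟩, rfl⟩
      · rintro ⟨v, ⟨-, hva⟩, hv⟩
        show w (F ω) = a
        rw [hv]; exact hva
    rw [this]
    exact (hFrange.sep _).measurableSet_biUnion (fun v _ => hFmeas v)
  -- the key set equality
  have hkey : {ω : ℝ | ∃ x : M, φ.Realize (Fin.snoc (fun j => f j ω) x)}
      = {ω | φ.Realize (Fin.snoc (fun j => f j ω) (g ω))} := by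
    ext ω
    simp only [Set.mem_setOf_eq]
    constructor
    · intro h
      have hFω : (fun j => f j ω) = F ω := rfl
      have h' : ∃ x : M, φ.Realize (Fin.snoc (F ω) x) := h
      have : g ω = h'.choose := by
        show (if h : ∃ x : M, φ.Realize (Fin.snoc (F ω) x) then h.choose
          else Classical.arbitrary M) = h'.choose
        rw [dif_pos h']
      rw [this]
      exact h'.choose_spec
    · intro h
      exact ⟨g ω, h⟩
  have hbound : ∀ t ∈ {t : ℝ | ∃ g : ℝ → M, (Set.range g).Finite ∧
      (∀ a, MeasurableSet (g ⁻¹' {a})) ∧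
      t = (μ {ω | φ.Realize (Fin.snoc (fun j => f j ω) (g ω))}).toReal},
      t ≤ (μ {ω | ∃ x : M, φ.Realize (Fin.snoc (fun j => f j ω) x)}).toReal := by
    rintro t ⟨g', -, -, rfl⟩
    refine ENNReal.toReal_mono (hfin _) (measure_mono ?_)
    intro ω h
    exact ⟨g' ω, h⟩
  have hmem : (μ {ω | ∃ x : M, φ.Realize (Fin.snoc (fun j => f j ω) x)}).toReal
      ∈ {t : ℝ | ∃ g : ℝ → M, (Set.range g).Finite ∧
      (∀ a, MeasurableSet (g ⁻¹' {a})) ∧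
      t = (μ {ω | φ.Realize (Fin.snoc (fun j => f j ω) (g ω))}).toReal} :=
    ⟨g, hgrange, hgmeas, by rw [hkey]⟩
  constructor
  · intro ε hε
    refine ⟨g, hgrange, hgmeas, ?_⟩
    rw [hkey, symmDiff_self]
    simpa using hε
  · refine le_antisymm (le_csSup ⟨_, hbound⟩ hmem) (csSup_le ⟨_, hmem⟩ hbound)
end

section
/- Let M, N be countable structures in the same countable language such that M ⊨ φ where φ is a Scott sentence of M. If the Borel randomizations satisfy M^{[0,1)} ≅ N^{[0,1)} (as metric structures), then M ≅ N. -/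
open MeasureTheory FirstOrder

local notation "μ01" => volume.restrict (Set.Ico (0 : ℝ) 1)

private lemma stmt11_measEq {N : Type} [Countable N] (u v : ℝ → N)
    (hu : ∀ b, MeasurableSet (u ⁻¹' {b})) (hv : ∀ b, MeasurableSet (v ⁻¹' {b})) :
    MeasurableSet {ω | u ω = v ω} := by
  have h : {ω | u ω = v ω} = ⋃ b : N, u ⁻¹' {b} ∩ v ⁻¹' {b} := by
    ext ω
    simp only [Set.mem_setOf_eq, Set.mem_iUnion, Set.mem_inter_iff, Set.mem_preimage,
      Set.mem_singleton_iff]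
    exact ⟨fun h => ⟨u ω, rfl, h.symm⟩, fun ⟨b, h1, h2⟩ => h1.trans h2.symm⟩
  rw [h]
  exact MeasurableSet.iUnion fun b => (hu b).inter (hv b)

private lemma stmt11_measTuple {N : Type} [Countable N] {n : ℕ}
    (u : Fin n → ℝ → N) (hu : ∀ j b, MeasurableSet (u j ⁻¹' {b}))
    (P : (Fin n → N) → Prop) :
    MeasurableSet {ω | P fun j => u j ω} := by
  have h : {ω | P fun j => u j ω}
      = ⋃ b : {b : Fin n → N // P b}, ⋂ j, u j ⁻¹' {(b : Fin n → N) j} := by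
    ext ω
    simp only [Set.mem_setOf_eq, Set.mem_iUnion, Set.mem_iInter, Set.mem_preimage,
      Set.mem_singleton_iff]
    constructor
    · intro h; exact ⟨⟨_, h⟩, fun j => rfl⟩
    · rintro ⟨⟨b, hb⟩, hj⟩
      have hb' : (fun j => u j ω) = b := funext hj
      rwa [hb']
  rw [h]
  exact MeasurableSet.iUnion fun b => MeasurableSet.iInter fun j => hu j _

/-- if `M` satisfies a Scott sentence `φ` of itself (here given
abstractly: a sentence in some system of sentences whose models among countable
structures are exactly the isomorphic copies of `M`), and the Borel randomizations
`M^{[0,1)}` and `N^{[0,1)}` are isomorphic — given concretely by a pair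
`(Φ, σ)` acting on `M`-valued Borel random variables on `[0,1)` and on the
probability algebra of `[0,1)`, preserving measure, Boolean operations mod null,
distances, the event maps `[[φ(·)]]` of all first-order formulas, and surjective
mod null — then `M ≅ N`. -/
theorem stmt_11 {L : Language} (M N : Type) [L.Structure M] [L.Structure N]
    [Countable M] [Countable N] [Nonempty M] [Nonempty N]
    -- Scott sentence data
    (S : Type) (Sat : ∀ (A : Type) [L.Structure A], S → Prop) (φscott : S)
    (hScott : ∀ (A : Type) [L.Structure A] [Countable A],
      Sat A φscott ↔ Nonempty (M ≃[L] A))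
    (hMφ : Sat M φscott)
    -- isomorphism of the Borel randomizations
    (Φ : (ℝ → M) → (ℝ → N)) (σ : Set ℝ → Set ℝ)
    (hΦmeas : ∀ f : ℝ → M, (∀ a, MeasurableSet (f ⁻¹' {a})) →
      ∀ b, MeasurableSet (Φ f ⁻¹' {b}))
    (hσmeas : ∀ E, MeasurableSet E → MeasurableSet (σ E))
    (hσμ : ∀ E, MeasurableSet E → μ01 (σ E) = μ01 E)
    (hσunion : ∀ E F, MeasurableSet E → MeasurableSet F →
      μ01 (symmDiff (σ (E ∪ F)) (σ E ∪ σ F)) = 0)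
    (hσcompl : ∀ E, MeasurableSet E → μ01 (symmDiff (σ Eᶜ) (σ E)ᶜ) = 0)
    (hσsurj : ∀ F, MeasurableSet F → ∃ E, MeasurableSet E ∧
      μ01 (symmDiff (σ E) F) = 0)
    (hΦiso : ∀ f g : ℝ → M, (∀ a, MeasurableSet (f ⁻¹' {a})) →
      (∀ a, MeasurableSet (g ⁻¹' {a})) →
      μ01 {ω | Φ f ω ≠ Φ g ω} = μ01 {ω | f ω ≠ g ω})
    (hΦsurj : ∀ g : ℝ → N, (∀ b, MeasurableSet (g ⁻¹' {b})) →
      ∃ f : ℝ → M, (∀ a, MeasurableSet (f ⁻¹' {a})) ∧ μ01 {ω | Φ f ω ≠ g ω} = 0)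
    (hcompat : ∀ (m : ℕ) (ψ : L.Formula (Fin m)) (f : Fin m → ℝ → M),
      (∀ j a, MeasurableSet (f j ⁻¹' {a})) →
      μ01 (symmDiff (σ {ω | ψ.Realize (fun j => f j ω)})
        {ω | ψ.Realize (fun j => Φ (f j) ω)}) = 0) :
    Nonempty (M ≃[L] N) := by
  classical
  set μ : Measure ℝ := volume.restrict (Set.Ico (0 : ℝ) 1) with hμdef
  have hμuniv : μ Set.univ = 1 := by
    rw [hμdef, Measure.restrict_apply_univ, Real.volume_Ico]
    norm_num
  have hne_top : ∀ s : Set ℝ, μ s ≠ ⊤ := by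
    intro s
    have h1 : μ s ≤ μ Set.univ := measure_mono (Set.subset_univ _)
    rw [hμuniv] at h1
    exact (lt_of_le_of_lt h1 ENNReal.one_lt_top).ne
  have hle1 : ∀ s : Set ℝ, μ s ≤ 1 := by
    intro s
    have h1 : μ s ≤ μ Set.univ := measure_mono (Set.subset_univ _)
    rwa [hμuniv] at h1
  -- constant functions have measurable fibers
  have hconst : ∀ (a c : M), MeasurableSet ((fun _ : ℝ => a) ⁻¹' {c}) := by
    intro a c
    rcases eq_or_ne a c with h | h
    · have he : ((fun _ : ℝ => a) ⁻¹' {c}) = Set.univ := by ext x; simp [h]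
      rw [he]; exact MeasurableSet.univ
    · have he : ((fun _ : ℝ => a) ⁻¹' {c}) = ∅ := by ext x; simp [h]
      rw [he]; exact MeasurableSet.empty
  have hconstN : ∀ (a c : N), MeasurableSet ((fun _ : ℝ => a) ⁻¹' {c}) := by
    intro a c
    rcases eq_or_ne a c with h | h
    · have he : ((fun _ : ℝ => a) ⁻¹' {c}) = Set.univ := by ext x; simp [h]
      rw [he]; exact MeasurableSet.univ
    · have he : ((fun _ : ℝ => a) ⁻¹' {c}) = ∅ := by ext x; simp [h]
      rw [he]; exact MeasurableSet.empty
  set F : M → ℝ → N := fun a => Φ fun _ => a with hFdef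
  have hFmeas : ∀ (a : M) (b : N), MeasurableSet (F a ⁻¹' {b}) :=
    fun a => hΦmeas _ (hconst a)
  -- distinct constants map to a.e.-distinct random variables
  have h1 : ∀ a b : M, a ≠ b → μ {ω | F a ω = F b ω} = 0 := by
    intro a b hab
    have hiso := hΦiso (fun _ => a) (fun _ => b) (hconst a) (hconst b)
    have hset : {ω : ℝ | (fun _ : ℝ => a) ω ≠ (fun _ : ℝ => b) ω} = Set.univ := by
      ext x; simp [hab]
    rw [hset, hμuniv] at hiso
    have hmeq : MeasurableSet {ω | F a ω = F b ω} :=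
      stmt11_measEq _ _ (hFmeas a) (hFmeas b)
    have hcompl : {ω | F a ω = F b ω}ᶜ = {ω | F a ω ≠ F b ω} := by
      ext x; simp
    have h2 := measure_compl hmeq.compl (hne_top _)
    rw [compl_compl, hμuniv, hcompl] at h2
    have hiso' : μ {ω | F a ω ≠ F b ω} = 1 := hiso
    rw [h2, hiso']
    simp
  -- formula-distinguished tuples give null sets
  have h2 : ∀ (n : ℕ) (x : Fin n → M) (b : Fin n → N),
      (∃ ψ : L.Formula (Fin n), ¬(ψ.Realize x ↔ ψ.Realize b)) →
      μ {ω | ∀ j, F (x j) ω = b j} = 0 := by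
    rintro n x b ⟨ψ, hψ⟩
    have hfm : ∀ (j : Fin n) (a : M), MeasurableSet ((fun _ : ℝ => x j) ⁻¹' {a}) :=
      fun j => hconst (x j)
    have hc := hcompat n ψ (fun j _ => x j) hfm
    set G : Set ℝ := {ω | ψ.Realize fun j => F (x j) ω} with hGdef
    have hc' : μ (symmDiff (σ {ω : ℝ | ψ.Realize fun j => x j}) G) = 0 := hc
    by_cases hx : ψ.Realize x
    · have hb : ¬ ψ.Realize b := fun h => hψ ⟨fun _ => h, fun _ => hx⟩
      have hSuniv : {ω : ℝ | ψ.Realize fun j => x j} = Set.univ :=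
        Set.eq_univ_of_forall fun ω => hx
      rw [hSuniv] at hc'
      have hσuniv_meas := hσmeas _ MeasurableSet.univ
      have hσuniv : μ (σ Set.univ) = 1 := by
        rw [hσμ _ MeasurableSet.univ]; exact hμuniv
      have hσcompl0 : μ (σ Set.univ)ᶜ = 0 := by
        rw [measure_compl hσuniv_meas (hne_top _), hμuniv, hσuniv]; simp
      have hsub : {ω | ∀ j, F (x j) ω = b j} ⊆ (σ Set.univ)ᶜ ∪ symmDiff (σ Set.univ) G := by
        intro ω hω
        have hωG : ω ∉ G := by
          intro hG
          have heq : (fun j => F (x j) ω) = b := funext hω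
          rw [hGdef, Set.mem_setOf_eq, heq] at hG
          exact hb hG
        by_cases hσω : ω ∈ σ Set.univ
        · exact Or.inr (Set.mem_symmDiff.mpr (Or.inl ⟨hσω, hωG⟩))
        · exact Or.inl hσω
      exact measure_mono_null hsub (measure_union_null hσcompl0 hc')
    · have hb : ψ.Realize b := by
        by_contra hbn; exact hψ ⟨fun h => absurd h hx, fun h => absurd h hbn⟩
      have hSempty : {ω : ℝ | ψ.Realize fun j => x j} = ∅ :=
        Set.eq_empty_iff_forall_notMem.mpr fun ω => hx
      rw [hSempty] at hc'
      have hσ0 : μ (σ ∅) = 0 := by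
        rw [hσμ _ MeasurableSet.empty]; simp
      have hsub : {ω | ∀ j, F (x j) ω = b j} ⊆ σ ∅ ∪ symmDiff (σ ∅) G := by
        intro ω hω
        have hωG : ω ∈ G := by
          have heq : (fun j => F (x j) ω) = b := funext hω
          rw [hGdef, Set.mem_setOf_eq, heq]
          exact hb
        by_cases hσω : ω ∈ σ ∅
        · exact Or.inl hσω
        · exact Or.inr (Set.mem_symmDiff.mpr (Or.inr ⟨hωG, hσω⟩))
      exact measure_mono_null hsub (measure_union_null hσ0 hc')
  -- choose preimages of the constants of N
  choose f hf hf0 using fun c : N => hΦsurj (fun _ => c) (hconstN c)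
  -- the injectivity bad set
  set Z : Set ℝ := ⋃ p : M × M, {ω | F p.1 ω = F p.2 ω ∧ p.1 ≠ p.2} with hZdef
  have hZpiece : ∀ p : M × M, MeasurableSet {ω | F p.1 ω = F p.2 ω ∧ p.1 ≠ p.2} ∧
      μ {ω | F p.1 ω = F p.2 ω ∧ p.1 ≠ p.2} = 0 := by
    intro p
    rcases eq_or_ne p.1 p.2 with h | h
    · have he : {ω | F p.1 ω = F p.2 ω ∧ p.1 ≠ p.2} = ∅ := by ext x; simp [h]
      rw [he]; exact ⟨MeasurableSet.empty, measure_empty⟩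
    · have he : {ω | F p.1 ω = F p.2 ω ∧ p.1 ≠ p.2} = {ω | F p.1 ω = F p.2 ω} := by
        ext x; simp [h]
      rw [he]; exact ⟨stmt11_measEq _ _ (hFmeas _) (hFmeas _), h1 _ _ h⟩
  have hZmeas : MeasurableSet Z := MeasurableSet.iUnion fun p => (hZpiece p).1
  have hZ0 : μ Z = 0 := measure_iUnion_null fun p => (hZpiece p).2
  -- the surjectivity bad sets
  have hΦfmeas : ∀ (c : N) (b : N), MeasurableSet (Φ (f c) ⁻¹' {b}) :=
    fun c => hΦmeas _ (hf c)
  have hDmeas : ∀ (c : N) (a : M), MeasurableSet {ω | Φ (f c) ω = F a ω} :=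
    fun c a => stmt11_measEq _ _ (hΦfmeas c) (hFmeas a)
  have hsurj0 : ∀ c : N, μ (⋃ a : M, {ω | Φ (f c) ω = F a ω})ᶜ = 0 := by
    intro c
    set D : M → Set ℝ := fun a => {ω | Φ (f c) ω = F a ω} with hDdef
    have hDZdisj : Pairwise (Function.onFun Disjoint fun a => D a \ Z) := by
      intro a b hab
      rw [Function.onFun, Set.disjoint_left]
      rintro ω ⟨hωa, hωZ⟩ ⟨hωb, -⟩
      exact hωZ (Set.mem_iUnion.mpr ⟨(a, b), ⟨hωa.symm.trans hωb, hab⟩⟩)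
    have hmeasDZ : ∀ a, MeasurableSet (D a \ Z) := fun a => (hDmeas c a).diff hZmeas
    have hDval : ∀ a, μ (D a) = μ (f c ⁻¹' {a}) := by
      intro a
      have hiso := hΦiso (f c) (fun _ => a) (hf c) (hconst a)
      have hne1 : {ω | f c ω ≠ (fun _ : ℝ => a) ω} = (f c ⁻¹' {a})ᶜ := by
        ext x; simp
      have hne2 : {ω | Φ (f c) ω ≠ Φ (fun _ : ℝ => a) ω} = (D a)ᶜ := by
        ext x; simp [hDdef, hFdef]
      rw [hne1, hne2] at hiso
      have hEc : μ ((f c ⁻¹' {a})ᶜ) = 1 - μ (f c ⁻¹' {a}) := by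
        rw [measure_compl (hf c a) (hne_top _), hμuniv]
      have hDcompl : μ ((D a)ᶜ) = 1 - μ (D a) := by
        rw [measure_compl (hDmeas c a) (hne_top _), hμuniv]
      have key : 1 - μ (D a) = 1 - μ (f c ⁻¹' {a}) := by
        rw [← hDcompl, ← hEc]; exact hiso
      calc μ (D a) = 1 - (1 - μ (D a)) :=
            (ENNReal.sub_sub_cancel ENNReal.one_ne_top (hle1 _)).symm
        _ = 1 - (1 - μ (f c ⁻¹' {a})) := by rw [key]
        _ = μ (f c ⁻¹' {a}) := ENNReal.sub_sub_cancel ENNReal.one_ne_top (hle1 _)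
    have hsum : ∑' a : M, μ (D a \ Z) = 1 := by
      have he : ∀ a, μ (D a \ Z) = μ (f c ⁻¹' {a}) := fun a =>
        (measure_diff_null hZ0).trans (hDval a)
      rw [tsum_congr he]
      have hdisj : Pairwise (Function.onFun Disjoint fun a : M => f c ⁻¹' {a}) := by
        intro a b hab
        rw [Function.onFun, Set.disjoint_left]
        intro ω hω1 hω2
        simp only [Set.mem_preimage, Set.mem_singleton_iff] at hω1 hω2
        exact hab (hω1.symm.trans hω2)
      rw [← measure_iUnion hdisj (fun a => hf c a)]
      have hU : (⋃ a : M, f c ⁻¹' {a}) = Set.univ :=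
        Set.eq_univ_of_forall fun ω => Set.mem_iUnion.mpr ⟨f c ω, rfl⟩
      rw [hU, hμuniv]
    have hU1 : μ (⋃ a : M, D a) = 1 := by
      refine le_antisymm (hle1 _) ?_
      have hge : μ (⋃ a : M, D a \ Z) ≤ μ (⋃ a : M, D a) :=
        measure_mono (Set.iUnion_mono fun a => Set.diff_subset)
      rw [measure_iUnion hDZdisj hmeasDZ, hsum] at hge
      exact hge
    rw [measure_compl (MeasurableSet.iUnion fun a => hDmeas c a) (hne_top _), hμuniv, hU1]
    simp
  -- assemble the global bad set
  set BF : Set ℝ := ⋃ t : Σ n : ℕ, (Fin n → M) × (Fin n → N),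
      ⋃ _h : (∃ ψ : L.Formula (Fin t.1), ¬(ψ.Realize t.2.1 ↔ ψ.Realize t.2.2)),
        {ω | ∀ j, F (t.2.1 j) ω = t.2.2 j} with hBFdef
  have hBF0 : μ BF = 0 :=
    measure_iUnion_null fun t => measure_iUnion_null fun h => h2 _ _ _ h
  have hBFmeas : MeasurableSet BF :=
    MeasurableSet.iUnion fun t => MeasurableSet.iUnion fun _h =>
      stmt11_measTuple (fun j => F (t.2.1 j)) (fun j => hFmeas (t.2.1 j))
        (fun v => ∀ j, v j = t.2.2 j)
  set BS : Set ℝ := ⋃ c : N,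
      ({ω | Φ (f c) ω ≠ c} ∪ (⋃ a : M, {ω | Φ (f c) ω = F a ω})ᶜ) with hBSdef
  have hBS0 : μ BS = 0 := by
    refine measure_iUnion_null fun c => measure_union_null ?_ (hsurj0 c)
    exact hf0 c
  have hBSmeas : MeasurableSet BS := by
    refine MeasurableSet.iUnion fun c => MeasurableSet.union ?_
      (MeasurableSet.iUnion fun a => hDmeas c a).compl
    have he : {ω | Φ (f c) ω ≠ c} = (Φ (f c) ⁻¹' {c})ᶜ := by ext x; simp
    rw [he]; exact (hΦfmeas c c).compl
  set B : Set ℝ := Z ∪ BF ∪ BS with hBdef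
  have hB0 : μ B = 0 := measure_union_null (measure_union_null hZ0 hBF0) hBS0
  have hBmeas : MeasurableSet B := ((hZmeas.union hBFmeas).union hBSmeas)
  -- pick a generic point ω ∈ [0,1)
  have hexists : ∃ ω, ω ∈ Set.Ico (0 : ℝ) 1 ∧ ω ∉ B := by
    by_contra hcon
    push_neg at hcon
    have hsub : Set.Ico (0 : ℝ) 1 ⊆ B := hcon
    have hge : μ B = 1 := by
      rw [hμdef, Measure.restrict_apply hBmeas,
        Set.inter_eq_self_of_subset_right hsub, Real.volume_Ico]
      norm_num
    rw [hB0] at hge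
    exact zero_ne_one hge
  obtain ⟨ω, hωIco, hωB⟩ := hexists
  set g : M → N := fun a => F a ω with hgdef
  have hωZ : ω ∉ Z := fun h => hωB (Or.inl (Or.inl h))
  have hωBF : ω ∉ BF := fun h => hωB (Or.inl (Or.inr h))
  have hωBS : ω ∉ BS := fun h => hωB (Or.inr h)
  have hinj : Function.Injective g := by
    intro a b hab
    by_contra hne
    exact hωZ (Set.mem_iUnion.mpr ⟨(a, b), ⟨hab, hne⟩⟩)
  have hsurjg : Function.Surjective g := by
    intro c
    have h1' : ω ∉ {ω' | Φ (f c) ω' ≠ c} ∪ (⋃ a : M, {ω' | Φ (f c) ω' = F a ω'})ᶜ :=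
      fun h => hωBS (Set.mem_iUnion.mpr ⟨c, h⟩)
    rw [Set.mem_union] at h1'
    push_neg at h1'
    obtain ⟨hval, hcov⟩ := h1'
    rw [Set.notMem_compl_iff] at hcov
    obtain ⟨a, ha⟩ := Set.mem_iUnion.mp hcov
    rw [Set.mem_setOf_eq] at ha
    rw [Set.mem_setOf_eq, not_not] at hval
    exact ⟨a, ha.symm.trans hval⟩
  have hstar : ∀ (n : ℕ) (x : Fin n → M) (ψ : L.Formula (Fin n)),
      ψ.Realize x ↔ ψ.Realize fun j => g (x j) := by
    intro n x ψ
    by_contra hψ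
    apply hωBF
    refine Set.mem_iUnion.mpr ⟨⟨n, x, fun j => g (x j)⟩, ?_⟩
    exact Set.mem_iUnion.mpr ⟨⟨ψ, hψ⟩, fun j => rfl⟩
  refine ⟨⟨Equiv.ofBijective g ⟨hinj, hsurjg⟩, ?_, ?_⟩⟩
  · intro n fn x
    have hs := hstar (n + 1) (Fin.snoc x (Language.Structure.funMap fn x))
      (Language.Term.equal (Language.Term.func fn fun i => Language.Term.var i.castSucc) (Language.Term.var (Fin.last n)))
    simp only [Language.Formula.realize_equal, Language.Term.realize_func, Language.Term.realize_var,
      Fin.snoc_castSucc, Fin.snoc_last] at hs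
    have hs' := hs.mp trivial
    exact hs'.symm
  · intro n r x
    have hs := hstar n x (r.formula Language.Term.var)
    simp only [Language.Formula.realize_rel, Language.Term.realize_var] at hs
    exact hs.symm
end
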